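/- If R0 > 1, then the quadratic f has exactly one positive real root, namely I2 = (−A1 + √Δ)/(2A2); i.e., f(I2) = 0, I2 > 0, and every I > 0 with f(I) = 0 equals I2. -/
import Mathlib


/-- If `R₀ > 1`, then the quadratic `f` has exactly one positive
real root, namely `I₂ = (−A₁ + √Δ)/(2A₂)`. -/
theorem stmt1 (A d β b μ0 μ1 : ℝ)
    (hA : 0 < A) (hd : 0 < d) (hβ : 0 < β) (hb : 0 < b)
    (hμ0 : 0 < μ0) (hμ1 : 0 < μ1) (hμ : μ0 < μ1)
    (R0 : ℝ) (hR0 : R0 = β * A / (d * (d + μ1)))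
    (A2 A1 A0 Δ : ℝ)
    (hA2 : A2 = (d + μ0) * β)
    (hA1 : A1 = d ^ 2 + (b * β + μ0) * d + (b * μ1 - A) * β)
    (hA0 : A0 = b * d * (d + μ1) * (1 - R0))
    (hΔ : Δ = A1 ^ 2 - 4 * A2 * A0)
    (f : ℝ → ℝ) (hf : ∀ I, f I = A2 * I ^ 2 + A1 * I + A0)
    (I2 : ℝ) (hI2 : I2 = (-A1 + Real.sqrt Δ) / (2 * A2))
    (hR0gt : 1 < R0) :
    f I2 = 0 ∧ 0 < I2 ∧ ∀ I : ℝ, 0 < I → f I = 0 → I = I2 := by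
  have hA2pos : 0 < A2 := by rw [hA2]; positivity
  have hA0neg : A0 < 0 := by
    rw [hA0]; have : 1 - R0 < 0 := by linarith
    have hpos : 0 < b * d * (d + μ1) := by positivity
    nlinarith
  have hΔpos : 0 < Δ := by rw [hΔ]; nlinarith
  set s := Real.sqrt Δ with hs
  have hs2 : s ^ 2 = Δ := Real.sq_sqrt hΔpos.le
  have hsA1 : |A1| < s := by
    have hsnn : 0 ≤ s := Real.sqrt_nonneg _
    nlinarith [abs_nonneg A1, sq_abs A1]
  have h1 : -A1 + s > 0 := by
    rcases abs_lt.1 hsA1 with ⟨h, h'⟩; linarith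
  have h2 : A1 + s > 0 := by
    rcases abs_lt.1 hsA1 with ⟨h, h'⟩; linarith
  have hI2pos : 0 < I2 := by rw [hI2]; positivity
  have hA2ne : A2 ≠ 0 := hA2pos.ne'
  have hfact : ∀ I, f I = A2 * (I - I2) * (I - (-A1 - s) / (2 * A2)) := by
    intro I
    rw [hf, hI2]
    field_simp
    nlinarith [hs2, hΔ]
  have hroot : f I2 = 0 := by rw [hfact]; ring
  refine ⟨hroot, hI2pos, fun I hIpos hfI => ?_⟩
  have := hfact I
  rw [hfI] at this
  have hI1neg : (-A1 - s) / (2 * A2) < 0 := by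
    apply div_neg_of_neg_of_pos <;> [linarith; positivity]
  have hne : I - (-A1 - s) / (2 * A2) ≠ 0 := by
    have : (-A1 - s) / (2 * A2) < I := lt_trans hI1neg hIpos
    linarith
  have := mul_eq_zero.1 this.symm
  rcases this with h | h
  · rcases mul_eq_zero.1 h with h' | h'
    · exact absurd h' hA2ne
    · linarith
  · exact absurd h hne
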